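/- Define S(y+z) = y - z for y ∈ K, z ∈ L (well-defined since V = K ⊕ L), and Δ = (2I-(P+Q))(P+Q)^{-1}. Then S*S = Δ; more precisely S*S(P+Q) = 2I-(P+Q). -/

import Mathlib

open scoped RealInnerProductSpace


open ContinuousLinearMap in
theorem stmt_17 {V : Type*} [NormedAddCommGroup V] [InnerProductSpace ℝ V] [CompleteSpace V]
    (K L : Submodule ℝ V) (hKc : IsClosed (K : Set V)) (hLc : IsClosed (L : Set V))
    (hsup : K ⊔ L = ⊤) (hinf : K ⊓ L = ⊥)
    (P Q : V →L[ℝ] V) (hPsa : IsSelfAdjoint P) (hQsa : IsSelfAdjoint Q)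
    (hPK : ∀ x, P x ∈ K) (hPfix : ∀ x ∈ K, P x = x)
    (hQL : ∀ x, Q x ∈ L) (hQfix : ∀ x ∈ L, Q x = x)
    (S Δ : V →L[ℝ] V) (hSK : ∀ y ∈ K, S y = y) (hSL : ∀ z ∈ L, S z = -z)
    -- `Δ = (2 - (P+Q)) / (P+Q)`, characterized by `Δ (P+Q) = 2 - (P+Q)`:
    (hΔ : Δ * (P + Q) = (2 : V →L[ℝ] V) - (P + Q)) :
    adjoint S * S * (P + Q) = (2 : V →L[ℝ] V) - (P + Q) ∧ adjoint S * S = Δ := by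
  have hPsym : ∀ a b : V, ⟪P a, b⟫ = ⟪a, P b⟫ := fun a b =>
    hPsa.isSymmetric a b
  have hQsym : ∀ a b : V, ⟪Q a, b⟫ = ⟪a, Q b⟫ := fun a b =>
    hQsa.isSymmetric a b
  -- main identity
  have h1 : adjoint S * S * (P + Q) = (2 : V →L[ℝ] V) - (P + Q) := by
    ext x
    apply ext_inner_right ℝ
    intro w
    obtain ⟨y, hy, z, hz, rfl⟩ := Submodule.mem_sup.1
      (by rw [hsup]; trivial : w ∈ K ⊔ L)
    have hS : S ((P + Q) x) = P x - Q x := by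
      simp [map_add, hSK _ (hPK x), hSL _ (hQL x), sub_eq_add_neg]
    have key : ⟪(adjoint S * S * (P + Q)) x, y + z⟫ = ⟪S ((P+Q) x), S (y + z)⟫ := by
      show ⟪adjoint S (S ((P + Q) x)), y + z⟫ = _
      exact adjoint_inner_left _ _ _
    rw [key, hS]
    have hSw : S (y + z) = y - z := by
      simp [map_add, hSK _ hy, hSL _ hz, sub_eq_add_neg]
    rw [hSw]
    have hPy : ⟪P x, y⟫ = ⟪x, y⟫ := by rw [hPsym, hPfix _ hy]
    have hQz : ⟪Q x, z⟫ = ⟪x, z⟫ := by rw [hQsym, hQfix _ hz]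
    simp only [inner_sub_left, inner_sub_right, inner_add_left, inner_add_right,
      ContinuousLinearMap.sub_apply, ContinuousLinearMap.add_apply, two_smul,
      ContinuousLinearMap.coe_smul', Pi.smul_apply]
    have h2 : ((2 : V →L[ℝ] V)) x = x + x := by
      have : (2 : V →L[ℝ] V) = 1 + 1 := by norm_num
      simp [this]
    rw [h2]
    simp only [inner_add_left]
    linarith [hPy, hQz]
  -- dense range of P + Q
  have hker : ∀ v : V, (∀ x : V, ⟪(P + Q) x, v⟫ = 0) → v = 0 := by
    intro v hv
    have hvv := hv v
    have hPP : ∀ a, P (P a) = P a := fun a => hPfix _ (hPK a)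
    have hQQ : ∀ a, Q (Q a) = Q a := fun a => hQfix _ (hQL a)
    have hPv : ⟪P v, v⟫ = ‖P v‖ ^ 2 := by
      rw [← hPP v] ; rw [hPsym]
      rw [hPP v, real_inner_self_eq_norm_sq]
    have hQv : ⟪Q v, v⟫ = ‖Q v‖ ^ 2 := by
      rw [← hQQ v] ; rw [hQsym]
      rw [hQQ v, real_inner_self_eq_norm_sq]
    have hsum : ‖P v‖ ^ 2 + ‖Q v‖ ^ 2 = 0 := by
      have : ⟪(P + Q) v, v⟫ = ‖P v‖ ^ 2 + ‖Q v‖ ^ 2 := by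
        simp [inner_add_left, hPv, hQv]
      rw [← this, hvv]
    have hP0 : P v = 0 := by
      have := sq_nonneg ‖P v‖
      have := sq_nonneg ‖Q v‖
      have : ‖P v‖ ^ 2 = 0 := by nlinarith
      simpa using pow_eq_zero_iff (n := 2) (by norm_num) |>.1 this
    have hQ0 : Q v = 0 := by
      have := sq_nonneg ‖P v‖
      have := sq_nonneg ‖Q v‖
      have : ‖Q v‖ ^ 2 = 0 := by nlinarith
      simpa using pow_eq_zero_iff (n := 2) (by norm_num) |>.1 this
    -- v ⟂ K and v ⟂ L
    have hvK : ∀ y ∈ K, ⟪v, y⟫ = 0 := by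
      intro y hy
      rw [← hPfix _ hy, ← hPsym, hP0]; simp
    have hvL : ∀ z ∈ L, ⟪v, z⟫ = 0 := by
      intro z hz
      rw [← hQfix _ hz, ← hQsym, hQ0]; simp
    have : ⟪v, v⟫ = 0 := by
      obtain ⟨y, hy, z, hz, hvyz⟩ := Submodule.mem_sup.1
        (by rw [hsup]; trivial : v ∈ K ⊔ L)
      have hre : (⟪v, v⟫ : ℝ) = ⟪v, y + z⟫ := by rw [hvyz]
      rw [hre, inner_add_right, hvK _ hy, hvL _ hz]; ring
    exact inner_self_eq_zero.1 this
  set T : V →ₗ[ℝ] V := (((P + Q) : V →L[ℝ] V) : V →ₗ[ℝ] V) with hT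
  have hd : Dense ((LinearMap.range T : Submodule ℝ V) : Set V) := by
    rw [Submodule.dense_iff_topologicalClosure_eq_top,
      Submodule.topologicalClosure_eq_top_iff, Submodule.eq_bot_iff]
    intro v hv
    refine hker v fun x => ?_
    exact (Submodule.mem_orthogonal _ v).1 hv _ (LinearMap.mem_range_self T x)
  have hd' : Dense ((Submodule.span ℝ ((LinearMap.range T : Submodule ℝ V) : Set V)) : Set V) := by
    rwa [Submodule.span_eq]
  refine ⟨h1, ContinuousLinearMap.ext_on hd' fun w hw => ?_⟩
  obtain ⟨x, rfl⟩ := (LinearMap.mem_range).1 hw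
  show (adjoint S * S) ((P + Q) x) = Δ ((P + Q) x)
  have e1 : (adjoint S * S) ((P + Q) x) = ((adjoint S * S) * (P + Q)) x := rfl
  have e2 : Δ ((P + Q) x) = (Δ * (P + Q)) x := rfl
  rw [e1, e2, h1, hΔ]
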